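/- Let G be an additive subgroup of F_q × F_q of order k such that K_G is a k-arc, and let A ∈ (F_q × F_q) \ G be such that the point Ā belongs to no secant of K_G. Then the set K_G ∪ φ_A(K_G) is a 2k-arc, and it equals K_{G'} for the additive subgroup G' = G ∪ (G + A). -/

import Mathlib

open Projectivization

abbrev PGPoint (K : Type*) [Field K] := Projectivization K (Fin 3 → K)

lemma vec3_ne_zero_left {K : Type*} [Field K] {a b c : K} (h : a ≠ 0) :
    ![a, b, c] ≠ 0 := fun hv => h (by simpa using congrFun hv 0)

lemma vec3_ne_zero_right {K : Type*} [Field K] {a b c : K} (h : c ≠ 0) :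
    ![a, b, c] ≠ 0 := fun hv => h (by simpa using congrFun hv 2)

/-- The affine point `(a, b, 1)` of `PG(2,q)`. -/
def affPt {K : Type*} [Field K] (a b : K) : PGPoint K :=
  Projectivization.mk K ![a, b, 1] (vec3_ne_zero_right one_ne_zero)

/-- Three points of `PG(2,q)` are collinear if they lie in a common subspace
of projective dimension at most one. -/
def Coll3 {K : Type*} [Field K] (p q r : PGPoint K) : Prop :=
  ∃ W : Submodule K (Fin 3 → K), Module.finrank K W ≤ 2 ∧
    p.submodule ≤ W ∧ q.submodule ≤ W ∧ r.submodule ≤ W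

/-- An arc: a set of points no three of which are collinear. -/
def IsArc {K : Type*} [Field K] (S : Set (PGPoint K)) : Prop :=
  ∀ p ∈ S, ∀ q ∈ S, ∀ r ∈ S, p ≠ q → p ≠ r → q ≠ r → ¬ Coll3 p q r

/-- `B` is a blocking set of the secants of `S`. -/
def BlocksSecants {K : Type*} [Field K] (S B : Set (PGPoint K)) : Prop :=
  (∀ b ∈ B, b ∉ S) ∧ ∀ p ∈ S, ∀ q ∈ S, p ≠ q → ∃ b ∈ B, Coll3 p q b

/-- Lines of `PG(2,q)` as point sets. -/
def IsLine {K : Type*} [Field K] (L : Set (PGPoint K)) : Prop :=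
  ∃ W : Submodule K (Fin 3 → K), Module.finrank K W = 2 ∧
    L = {x : PGPoint K | x.submodule ≤ W}

/-- The line `ℓ∞ : X₃ = 0`. -/
def lInf (K : Type*) [Field K] : Set (PGPoint K) := {x : PGPoint K | x.rep 2 = 0}

/-- The point set `K_G = {(a, b, 1) : (a,b) ∈ G}`. -/
def KG {K : Type*} [Field K] (G : Set (K × K)) : Set (PGPoint K) :=
  (fun A : K × K => affPt A.1 A.2) '' G

/-- The linear map underlying the elation `φ_A`, `A = (a₁, a₂)`. -/
def elationLin (K : Type*) [Field K] (a1 a2 : K) : (Fin 3 → K) →ₗ[K] (Fin 3 → K) where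
  toFun v := ![v 0 + a1 * v 2, v 1 + a2 * v 2, v 2]
  map_add' u v := by funext i; fin_cases i <;> simp <;> ring
  map_smul' c v := by funext i; fin_cases i <;> simp <;> ring

lemma elationLin_injective {K : Type*} [Field K] (a1 a2 : K) :
    Function.Injective (elationLin K a1 a2) := by
  intro u v h
  have h0 := congrFun h 0
  have h1 := congrFun h 1
  have h2 := congrFun h 2
  simp [elationLin] at h0 h1 h2
  rw [h2] at h0 h1
  have e0 : u 0 = v 0 := add_right_cancel h0
  have e1 : u 1 = v 1 := add_right_cancel h1
  funext i
  fin_cases i <;> assumption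

/-- The elation `φ_A : (X₁,X₂,X₃) ↦ (X₁+a₁X₃, X₂+a₂X₃, X₃)` as a map on `PG(2,q)`. -/
def elation {K : Type*} [Field K] (a1 a2 : K) : PGPoint K → PGPoint K :=
  Projectivization.map (elationLin K a1 a2) (elationLin_injective a1 a2)

/-- The linear map underlying the homology
`(X₁,X₂,X₃) ↦ (λX₁+a₁X₃, λX₂+a₂X₃, X₃)`. -/
def homologyLin (K : Type*) [Field K] (l a1 a2 : K) : (Fin 3 → K) →ₗ[K] (Fin 3 → K) where
  toFun v := ![l * v 0 + a1 * v 2, l * v 1 + a2 * v 2, v 2]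
  map_add' u v := by funext i; fin_cases i <;> simp <;> ring
  map_smul' c v := by funext i; fin_cases i <;> simp <;> ring

lemma homologyLin_injective {K : Type*} [Field K] {l : K} (hl : l ≠ 0) (a1 a2 : K) :
    Function.Injective (homologyLin K l a1 a2) := by
  intro u v h
  have h0 := congrFun h 0
  have h1 := congrFun h 1
  have h2 := congrFun h 2
  simp [homologyLin] at h0 h1 h2
  rw [h2] at h0 h1
  have e0 : u 0 = v 0 := mul_left_cancel₀ hl (add_right_cancel h0)
  have e1 : u 1 = v 1 := mul_left_cancel₀ hl (add_right_cancel h1)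
  funext i
  fin_cases i <;> assumption

/-- The homology with axis `ℓ∞` as a map on `PG(2,q)`. -/
def homology {K : Type*} [Field K] {l : K} (hl : l ≠ 0) (a1 a2 : K) :
    PGPoint K → PGPoint K :=
  Projectivization.map (homologyLin K l a1 a2) (homologyLin_injective hl a1 a2)

lemma one_add_ne_zero {K : Type*} [Field K] [CharP K 2] {l : K} (h : l ≠ 1) :
    1 + l ≠ 0 := by
  intro h0
  apply h
  have : l = -1 := by linear_combination h0
  rw [this, CharTwo.neg_eq]

lemma add_one_ne_zero' {K : Type*} [Field K] [CharP K 2] {l : K} (h : l ≠ 1) :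
    l + 1 ≠ 0 := by rw [add_comm]; exact one_add_ne_zero h

lemma vec3_ne_zero_mid {K : Type*} [Field K] {a b c : K} (h : b ≠ 0) :
    ![a, b, c] ≠ 0 := fun hv => h (by simpa using congrFun hv 1)

lemma vec3_ne_zero_pair {K : Type*} [Field K] {A : K × K} (h : A ≠ (0, 0)) :
    ![A.1, A.2, 0] ≠ 0 := by
  intro hv
  apply h
  have h0 := congrFun hv 0
  have h1 := congrFun hv 1
  simp at h0 h1
  exact Prod.ext h0 h1

section MyAux

variable {K : Type*} [Field K]

lemma my_affPt_injective : Function.Injective (fun c : K × K => affPt c.1 c.2) := by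
  intro c d h
  simp only [affPt, Projectivization.mk_eq_mk_iff] at h
  obtain ⟨a, ha⟩ := h
  have h2 := congrFun ha 2
  simp [Units.smul_def] at h2
  have h0 := congrFun ha 0
  have h1 := congrFun ha 1
  simp [Units.smul_def, h2] at h0 h1
  exact Prod.ext h0.symm h1.symm

/-- Symmetric affine collinearity predicate on `K × K`. -/
def AffColl (x y z : K × K) : Prop :=
  ∃ a b c : K, ¬(a = 0 ∧ b = 0 ∧ c = 0) ∧ a + b + c = 0 ∧ a • x + b • y + c • z = 0

lemma affColl_swap23 {x y z : K × K} (h : AffColl x y z) : AffColl x z y := by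
  obtain ⟨a, b, c, h1, h2, h3⟩ := h
  exact ⟨a, c, b, by tauto, by linear_combination h2, by rw [add_right_comm]; exact h3⟩

lemma affColl_rot {x y z : K × K} (h : AffColl x y z) : AffColl y z x := by
  obtain ⟨a, b, c, h1, h2, h3⟩ := h
  refine ⟨b, c, a, by tauto, by linear_combination h2, ?_⟩
  rw [add_comm _ (a • x), ← add_assoc]; exact h3

lemma affColl_translate {x y z : K × K} (t : K × K) (h : AffColl x y z) :
    AffColl (x + t) (y + t) (z + t) := by
  obtain ⟨a, b, c, h1, h2, h3⟩ := h
  refine ⟨a, b, c, h1, h2, ?_⟩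
  have e : a • (x + t) + b • (y + t) + c • (z + t)
      = (a • x + b • y + c • z) + (a + b + c) • t := by
    simp only [smul_add, add_smul]; abel
  rw [e, h2, h3, zero_smul, add_zero]

lemma coll3_swap23 {p q r : PGPoint K} (h : Coll3 p q r) : Coll3 p r q := by
  obtain ⟨W, h1, h2, h3, h4⟩ := h; exact ⟨W, h1, h2, h4, h3⟩

lemma coll3_rot {p q r : PGPoint K} (h : Coll3 p q r) : Coll3 q r p := by
  obtain ⟨W, h1, h2, h3, h4⟩ := h; exact ⟨W, h1, h3, h4, h2⟩

lemma coll3_of_dep {u v w : Fin 3 → K} (hu : u ≠ 0) (hv : v ≠ 0) (hw : w ≠ 0)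
    {a b c : K} (hc : c ≠ 0) (h : a • u + b • v + c • w = 0) :
    Coll3 (Projectivization.mk K u hu) (Projectivization.mk K v hv)
      (Projectivization.mk K w hw) := by
  have hmemw : w ∈ Submodule.span K ({u, v} : Set (Fin 3 → K)) := by
    have h1 : c • w = (-a) • u + (-b) • v := by
      rw [neg_smul, neg_smul, ← neg_add]
      exact eq_neg_of_add_eq_zero_right h
    have h2 : c • w ∈ Submodule.span K ({u, v} : Set (Fin 3 → K)) := by
      rw [h1]
      exact Submodule.add_mem _
        (Submodule.smul_mem _ _ (Submodule.subset_span (by simp)))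
        (Submodule.smul_mem _ _ (Submodule.subset_span (by simp)))
    have := Submodule.smul_mem _ c⁻¹ h2
    rwa [inv_smul_smul₀ hc] at this
  refine ⟨Submodule.span K ({u, v} : Set (Fin 3 → K)), ?_, ?_, ?_, ?_⟩
  · have e : ({u, v} : Set (Fin 3 → K)) = insert u {v} := rfl
    rw [e, Submodule.span_insert]
    have hfin := Submodule.finrank_sup_add_finrank_inf_eq
      (Submodule.span K ({u} : Set (Fin 3 → K))) (Submodule.span K ({v} : Set (Fin 3 → K)))
    have h1 : Module.finrank K (Submodule.span K ({u} : Set (Fin 3 → K))) = 1 :=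
      finrank_span_singleton hu
    have h2 : Module.finrank K (Submodule.span K ({v} : Set (Fin 3 → K))) = 1 :=
      finrank_span_singleton hv
    omega
  · rw [Projectivization.submodule_mk, Submodule.span_singleton_le_iff_mem]
    exact Submodule.subset_span (by simp)
  · rw [Projectivization.submodule_mk, Submodule.span_singleton_le_iff_mem]
    exact Submodule.subset_span (by simp)
  · rw [Projectivization.submodule_mk, Submodule.span_singleton_le_iff_mem]
    exact hmemw

end MyAux
section MyAux2
variable {K : Type*} [Field K]

lemma coll3_affPt_iff (x y z : K × K) :
    Coll3 (affPt x.1 x.2) (affPt y.1 y.2) (affPt z.1 z.2) ↔ AffColl x y z := by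
  set u : Fin 3 → K := ![x.1, x.2, 1] with hu
  set v : Fin 3 → K := ![y.1, y.2, 1] with hv
  set w : Fin 3 → K := ![z.1, z.2, 1] with hw
  constructor
  · rintro ⟨W, hW, hp, hq, hr⟩
    simp only [affPt, Projectivization.submodule_mk,
      Submodule.span_singleton_le_iff_mem] at hp hq hr
    have hdep : ¬ LinearIndependent K ![u, v, w] := by
      intro hind
      have hmem : ∀ i : Fin 3, ![u, v, w] i ∈ W := by
        intro i; fin_cases i <;> assumption
      have hres : LinearIndependent K (fun i : Fin 3 => (⟨![u, v, w] i, hmem i⟩ : W)) := by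
        apply LinearIndependent.of_comp W.subtype
        convert hind
        rfl
      have h3 := hres.fintype_card_le_finrank
      simp only [Fintype.card_fin] at h3
      omega
    rw [Fintype.not_linearIndependent_iff] at hdep
    obtain ⟨g, hsum, i, hi⟩ := hdep
    rw [Fin.sum_univ_three] at hsum
    simp only [Matrix.cons_val_zero, Matrix.cons_val_one, Matrix.head_cons,
      Matrix.cons_val_two, Matrix.tail_cons] at hsum
    refine ⟨g 0, g 1, g 2, ?_, ?_, ?_⟩
    · rintro ⟨h0, h1, h2⟩; fin_cases i <;> simp_all
    · have := congrFun hsum 2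
      simpa [hu, hv, hw] using this
    · have h0 := congrFun hsum 0
      have h1 := congrFun hsum 1
      simp only [hu, hv, hw, Pi.add_apply, Pi.smul_apply, Matrix.cons_val_zero,
        Matrix.cons_val_one, Matrix.head_cons, Pi.zero_apply, smul_eq_mul] at h0 h1
      rw [Prod.ext_iff]
      constructor <;> simpa [Prod.smul_fst, Prod.smul_snd]
  · rintro ⟨a, b, c, hne, hsum, hvec⟩
    have hvec1 := congrArg Prod.fst hvec
    have hvec2 := congrArg Prod.snd hvec
    simp only [Prod.fst_add, Prod.snd_add, Prod.smul_fst, Prod.smul_snd,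
      smul_eq_mul, Prod.fst_zero, Prod.snd_zero] at hvec1 hvec2
    have heq : a • u + b • v + c • w = 0 := by
      funext i
      fin_cases i <;>
        simp [hu, hv, hw, smul_eq_mul] <;>
        [exact hvec1; exact hvec2; linear_combination hsum]
    have hune : u ≠ 0 := vec3_ne_zero_right one_ne_zero
    have hvne : v ≠ 0 := vec3_ne_zero_right one_ne_zero
    have hwne : w ≠ 0 := vec3_ne_zero_right one_ne_zero
    have hcases : a ≠ 0 ∨ b ≠ 0 ∨ c ≠ 0 := by tauto
    show Coll3 (Projectivization.mk K u hune) (Projectivization.mk K v hvne)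
      (Projectivization.mk K w hwne)
    rcases hcases with ha | hb | hc
    · have h' : b • v + c • w + a • u = 0 := by
        rw [add_comm _ (a • u), ← add_assoc]; exact heq
      have := coll3_of_dep hvne hwne hune ha h'
      exact coll3_rot (coll3_rot this)
    · have h' : a • u + c • w + b • v = 0 := by
        rw [add_right_comm]; exact heq
      exact coll3_swap23 (coll3_of_dep hune hwne hvne hb h')
    · exact coll3_of_dep hune hvne hwne hc heq

lemma elation_affPt (A c : K × K) :
    elation A.1 A.2 (affPt c.1 c.2) = affPt (c.1 + A.1) (c.2 + A.2) := by
  have hv : elationLin K A.1 A.2 ![c.1, c.2, 1] = ![c.1 + A.1, c.2 + A.2, 1] := by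
    funext i; fin_cases i <;> simp [elationLin]
  rw [elation, affPt, Projectivization.map_mk, affPt]
  rw [Projectivization.mk_eq_mk_iff']
  exact ⟨1, by rw [one_smul, hv]⟩

end MyAux2
/-- if `K_G` is a translation `k`-arc and the point `Ā` lies on no
secant of `K_G`, then `K_G ∪ φ_A(K_G)` is a translation `2k`-arc, namely
`K_{G'}` for the additive subgroup `G' = G ∪ (G + A)`. -/
theorem translation_arc_doubling
    {r : ℕ} (hr : 1 ≤ r) {K : Type*} [Field K] [Fintype K]
    (hq : Fintype.card K = 2 ^ r)
    (G : AddSubgroup (K × K)) (k : ℕ) (hk : Nat.card G = k)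
    (harc : IsArc (KG (G : Set (K × K))))
    (A : K × K) (hA : A ∉ G)
    (hAsec : ∀ p ∈ KG (G : Set (K × K)), ∀ q ∈ KG (G : Set (K × K)),
      p ≠ q → ¬ Coll3 p q (affPt A.1 A.2)) :
    IsArc (KG (G : Set (K × K)) ∪ elation A.1 A.2 '' KG (G : Set (K × K))) ∧
      (KG (G : Set (K × K)) ∪ elation A.1 A.2 '' KG (G : Set (K × K))).ncard = 2 * k ∧
      ∃ G' : AddSubgroup (K × K),
        (G' : Set (K × K)) = (G : Set (K × K)) ∪ (fun B : K × K => B + A) '' (G : Set (K × K)) ∧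
        KG (G : Set (K × K)) ∪ elation A.1 A.2 '' KG (G : Set (K × K)) =
          KG (G' : Set (K × K)) := by
  classical
  -- characteristic 2
  have hchar : ringChar K = 2 := by
    obtain ⟨n, hp, hcard⟩ := FiniteField.card K (ringChar K)
    rw [hq] at hcard
    have hdvd : ringChar K ∣ 2 ^ r := by
      rw [hcard]
      exact dvd_pow_self _ n.pos.ne'
    have h2 : ringChar K ∣ 2 := hp.dvd_of_dvd_pow hdvd
    exact (Nat.prime_dvd_prime_iff_eq hp Nat.prime_two).1 h2
  haveI hchar2 : CharP K 2 := hchar ▸ ringChar.charP K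
  have htwo : ∀ a : K, a + a = 0 := fun a => CharTwo.add_self_eq_zero a
  have hAA : A + A = 0 := Prod.ext (htwo A.1) (htwo A.2)
  have hnegA : -A = A := neg_eq_of_add_eq_zero_left hAA
  set S' : Set (K × K) := ↑G ∪ (fun B : K × K => B + A) '' ↑G with hS'
  have hmem' : ∀ c : K × K, c ∈ S' ↔ (c ∈ G ∨ ∃ g ∈ G, c = g + A) := by
    intro c
    simp only [hS', Set.mem_union, Set.mem_image, SetLike.mem_coe]
    constructor
    · rintro (h | ⟨g, hg, hge⟩); exacts [Or.inl h, Or.inr ⟨g, hg, hge.symm⟩]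
    · rintro (h | ⟨g, hg, hge⟩); exacts [Or.inl h, Or.inr ⟨g, hg, hge.symm⟩]
  -- S' is a subgroup
  have hG' : ∃ G' : AddSubgroup (K × K), (G' : Set (K × K)) = S' := by
    refine ⟨⟨⟨⟨S', ?_⟩, ?_⟩, ?_⟩, rfl⟩
    · intro x y hx hy
      rcases (hmem' x).1 hx with hx' | ⟨gx, hgx, rfl⟩ <;>
        rcases (hmem' y).1 hy with hy' | ⟨gy, hgy, rfl⟩
      · exact (hmem' _).2 (Or.inl (G.add_mem hx' hy'))
      · exact (hmem' _).2 (Or.inr ⟨x + gy, G.add_mem hx' hgy, (add_assoc x gy A).symm⟩)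
      · exact (hmem' _).2 (Or.inr ⟨gx + y, G.add_mem hgx hy', add_right_comm gx A y⟩)
      · refine (hmem' _).2 (Or.inl ?_)
        have e : gx + A + (gy + A) = gx + gy := by
          rw [add_add_add_comm, hAA, add_zero]
        rw [e]; exact G.add_mem hgx hgy
    · exact (hmem' 0).2 (Or.inl G.zero_mem)
    · intro x hx
      rcases (hmem' x).1 hx with hx' | ⟨g, hg, rfl⟩
      · exact (hmem' _).2 (Or.inl (G.neg_mem hx'))
      · exact (hmem' _).2 (Or.inr ⟨-g, G.neg_mem hg, by rw [neg_add, hnegA]⟩)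
  obtain ⟨G', hG'eq⟩ := hG'
  -- disjointness
  have hGdisj : Disjoint (G : Set (K × K)) ((fun B : K × K => B + A) '' ↑G) := by
    rw [Set.disjoint_left]
    rintro x hx ⟨g, hg, hgx⟩
    have hgx' : g + A = x := hgx
    have hxA : A = x - g := by rw [← hgx']; abel
    exact hA (by rw [hxA]; exact G.sub_mem hx hg)
  -- image of elation
  have himg : elation A.1 A.2 '' KG (↑G : Set (K × K))
      = KG ((fun B : K × K => B + A) '' ↑G) := by
    rw [KG, KG, ← Set.image_comp, ← Set.image_comp]
    exact Set.image_congr (fun c _ => elation_affPt A c)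
  have hsetEq : KG (↑G : Set (K × K)) ∪ elation A.1 A.2 '' KG (↑G : Set (K × K)) = KG S' := by
    rw [himg]
    exact (Set.image_union _ _ _).symm
  -- cardinalities
  have hfin1 : (G : Set (K × K)).Finite := Set.toFinite _
  have hcard1 : (G : Set (K × K)).ncard = k := by
    rw [← Nat.card_coe_set_eq]; exact hk
  have hcard2 : ((fun B : K × K => B + A) '' ↑G).ncard = k := by
    rw [Set.ncard_image_of_injective _ (add_left_injective A)]; exact hcard1
  have hcardS' : S'.ncard = 2 * k := by
    rw [hS', Set.ncard_union_eq hGdisj hfin1 (hfin1.image _), hcard1, hcard2]; omega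
  -- arc helpers
  have hG3 : ∀ g1 ∈ G, ∀ g2 ∈ G, ∀ g3 ∈ G, g1 ≠ g2 → g1 ≠ g3 → g2 ≠ g3 →
      ¬ AffColl g1 g2 g3 := by
    intro g1 h1 g2 h2 g3 h3 h12 h13 h23 haff
    exact harc _ ⟨g1, h1, rfl⟩ _ ⟨g2, h2, rfl⟩ _ ⟨g3, h3, rfl⟩
      (fun h => h12 (my_affPt_injective h)) (fun h => h13 (my_affPt_injective h))
      (fun h => h23 (my_affPt_injective h)) ((coll3_affPt_iff _ _ _).2 haff)
  have hG2A : ∀ g1 ∈ G, ∀ g2 ∈ G, g1 ≠ g2 → ¬ AffColl g1 g2 A := by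
    intro g1 h1 g2 h2 h12 haff
    exact hAsec _ ⟨g1, h1, rfl⟩ _ ⟨g2, h2, rfl⟩
      (fun h => h12 (my_affPt_injective h)) ((coll3_affPt_iff g1 g2 A).2 haff)
  have helper2 : ∀ g1 ∈ G, ∀ g2 ∈ G, ∀ g ∈ G, g1 ≠ g2 → ¬ AffColl g1 g2 (g + A) := by
    intro g1 h1 g2 h2 g hg h12 haff
    have h' := affColl_translate (-g) haff
    have e3 : g + A + -g = A := by abel
    rw [e3] at h'
    exact hG2A _ (G.add_mem h1 (G.neg_mem hg)) _ (G.add_mem h2 (G.neg_mem hg))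
      (fun h => h12 (add_right_cancel h)) h'
  have hAAcancel : ∀ x : K × K, x + A + A = x := fun x => by
    rw [add_assoc, hAA, add_zero]
  have key : ∀ x ∈ S', ∀ y ∈ S', ∀ z ∈ S', x ≠ y → x ≠ z → y ≠ z → ¬ AffColl x y z := by
    intro x hx y hy z hz hxy hxz hyz haff
    rcases (hmem' x).1 hx with hx' | ⟨gx, hgx, rfl⟩ <;>
      rcases (hmem' y).1 hy with hy' | ⟨gy, hgy, rfl⟩ <;>
        rcases (hmem' z).1 hz with hz' | ⟨gz, hgz, rfl⟩
    · exact hG3 x hx' y hy' z hz' hxy hxz hyz haff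
    · exact helper2 x hx' y hy' gz hgz hxy haff
    · exact helper2 x hx' z hz' gy hgy hxz (affColl_swap23 haff)
    · have h' := affColl_translate A haff
      rw [hAAcancel gy, hAAcancel gz] at h'
      exact helper2 gy hgy gz hgz x hx' (fun h => hyz (by rw [h])) (affColl_rot h')
    · exact helper2 y hy' z hz' gx hgx hyz (affColl_rot haff)
    · have h' := affColl_translate A haff
      rw [hAAcancel gx, hAAcancel gz] at h'
      exact helper2 gx hgx gz hgz y hy' (fun h => hxz (by rw [h])) (affColl_swap23 h')
    · have h' := affColl_translate A haff
      rw [hAAcancel gx, hAAcancel gy] at h'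
      exact helper2 gx hgx gy hgy z hz' (fun h => hxy (by rw [h])) h'
    · have h' := affColl_translate A haff
      rw [hAAcancel gx, hAAcancel gy, hAAcancel gz] at h'
      exact hG3 gx hgx gy hgy gz hgz (fun h => hxy (by rw [h]))
        (fun h => hxz (by rw [h])) (fun h => hyz (by rw [h])) h'
  refine ⟨?_, ?_, G', hG'eq, by rw [hsetEq, hG'eq]⟩
  · rw [hsetEq]
    rintro p ⟨x, hx, rfl⟩ q ⟨y, hy, rfl⟩ s ⟨z, hz, rfl⟩ hpq hps hqs hcoll
    exact key x hx y hy z hz (fun h => hpq (by rw [h])) (fun h => hps (by rw [h]))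
      (fun h => hqs (by rw [h])) ((coll3_affPt_iff _ _ _).1 hcoll)
  · rw [hsetEq, KG, Set.ncard_image_of_injective _ my_affPt_injective, hcardS']
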